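/- Let k be a field, n a natural number, and R_n = k[t]/(t^{n+1}) the truncated polynomial ring. Let A be a smooth R_n-algebra (i.e. formally smooth and of finite presentation over R_n) and let A_0 = A ⊗_{R_n} k be its special fibre. Then there exists an isomorphism of R_n-algebras A ≅ A_0 ⊗_k R_n. (Deformations of smooth affine schemes over the truncated polynomial ring are trivial.) -/

import Mathlib

open Polynomial TensorProduct

set_option synthInstance.maxHeartbeats 400000
set_option maxHeartbeats 1000000
noncomputable section

abbrev TruncPoly (k : Type) [Field k] (n : ℕ) : Type :=
  Polynomial k ⧸ Ideal.span {(X : Polynomial k) ^ (n + 1)}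

noncomputable instance TruncPoly.residueAlgebra (k : Type) [Field k] (n : ℕ) :
    Algebra (TruncPoly k n) k :=
  RingHom.toAlgebra <| Ideal.Quotient.lift _ (aeval (0 : k)).toRingHom <| by
    intro a ha
    rw [Ideal.mem_span_singleton] at ha
    obtain ⟨c, rfl⟩ := ha
    simp

variable (k : Type) [Field k] (n : ℕ)

lemma TruncPoly.eps_mk (p : Polynomial k) :
    algebraMap (TruncPoly k n) k (Ideal.Quotient.mk _ p) = p.eval 0 := by
  show Ideal.Quotient.lift _ _ _ _ = _
  rw [Ideal.Quotient.lift_mk]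
  simp [aeval_def, eval₂_eq_eval_map]

lemma TruncPoly.eps_sigma (c : k) :
    algebraMap (TruncPoly k n) k (algebraMap k (TruncPoly k n) c) = c := by
  have : algebraMap k (TruncPoly k n) c = Ideal.Quotient.mk _ (C c) := rfl
  rw [this, TruncPoly.eps_mk]
  simp

lemma TruncPoly.ker_nilpotent :
    IsNilpotent (RingHom.ker (algebraMap (TruncPoly k n) k)) := by
  refine ⟨n+1, ?_⟩
  have hle : RingHom.ker (algebraMap (TruncPoly k n) k) ≤
      Ideal.span {Ideal.Quotient.mk _ (X : Polynomial k)} := by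
    intro x hx
    obtain ⟨p, rfl⟩ := Ideal.Quotient.mk_surjective x
    rw [RingHom.mem_ker, TruncPoly.eps_mk] at hx
    rw [Ideal.mem_span_singleton]
    obtain ⟨q, hq⟩ := (dvd_iff_isRoot (p := p) (a := 0)).mpr hx
    exact ⟨Ideal.Quotient.mk _ q, by rw [← map_mul]; exact congrArg _ (by rw [hq]; simp)⟩
  have := Ideal.pow_right_mono hle (n+1)
  rw [Ideal.span_singleton_pow, ← map_pow] at this
  rw [Ideal.Quotient.eq_zero_iff_mem.mpr (Ideal.mem_span_singleton_self _)] at this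
  simpa [Ideal.span_singleton_eq_bot.mpr rfl, le_bot_iff] using this


/-- Nilpotent Nakayama: if every element of `B` is congruent to an element of the
`R`-submodule `S` modulo `I·B` with `I` a nilpotent ideal of `R`, then `S = ⊤`. -/
lemma nakayama_aux {R B : Type} [CommRing R] [CommRing B] [Algebra R B]
    {I : Ideal R} (hI : IsNilpotent I) {S : Submodule R B}
    (h : ∀ b : B, ∃ s ∈ S, b - s ∈ I.map (algebraMap R B)) : ∀ b : B, b ∈ S := by
  obtain ⟨m, hm⟩ := hI
  have htop : (⊤ : Submodule R B) ≤ S ⊔ I • (⊤ : Submodule R B) := by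
    intro b _
    obtain ⟨s, hs, hbs⟩ := h b
    have : b = s + (b - s) := by ring
    rw [this]
    refine Submodule.add_mem_sup hs ?_
    rw [Ideal.smul_top_eq_map]
    exact hbs
  have key : ∀ j : ℕ, (⊤ : Submodule R B) ≤ S ⊔ I ^ (j + 1) • (⊤ : Submodule R B) := by
    intro j
    induction j with
    | zero => simpa using htop
    | succ j ih =>
      refine le_trans ih (sup_le le_sup_left ?_)
      have : I ^ (j + 1) • (⊤ : Submodule R B) ≤ I ^ (j + 1) • (S ⊔ I • ⊤) :=
        Submodule.smul_mono le_rfl htop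
      refine le_trans this ?_
      rw [Submodule.smul_sup]
      refine sup_le (le_trans Submodule.smul_le_right le_sup_left) ?_
      have : I ^ (j + 1) • (I • (⊤ : Submodule R B)) = I ^ (j + 1 + 1) • ⊤ := by
        rw [show I ^ (j + 1 + 1) = I ^ (j + 1) * I from pow_succ _ _, ← Ideal.smul_eq_mul,
          Submodule.smul_assoc]
      rw [this]
      exact le_sup_right
  intro b
  have := key m (Submodule.mem_top : b ∈ ⊤)
  have hz : I ^ (m + 1) • (⊤ : Submodule R B) = ⊥ := by
    rw [pow_succ, hm, zero_mul]
    exact Submodule.bot_smul ⊤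
  rwa [hz, sup_bot_eq] at this

lemma nilpotent_of_le_map {R B : Type} [CommRing R] [CommRing B] [Algebra R B]
    {I : Ideal R} (hI : IsNilpotent I) {K : Ideal B}
    (h : K ≤ I.map (algebraMap R B)) : IsNilpotent K := by
  obtain ⟨m, hm⟩ := hI
  refine ⟨m, ?_⟩
  rw [Submodule.zero_eq_bot, ← le_bot_iff]
  calc K ^ m ≤ (I.map (algebraMap R B)) ^ m := Ideal.pow_right_mono h m
    _ = (I ^ m).map (algebraMap R B) := (Ideal.map_pow (f := algebraMap R B) (I := I) m).symm
    _ = ⊥ := by rw [hm, Submodule.zero_eq_bot]; exact Ideal.map_bot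

/-- The general statement: if `R` retracts onto `k` with nilpotent kernel, then any
formally smooth `R`-algebra is isomorphic to the base change of its fibre. -/
theorem smooth_deformation_general (R k : Type) [Field k] [CommRing R]
    [Algebra k R] [Algebra R k]
    (hres : ∀ c : k, algebraMap R k (algebraMap k R c) = c)
    (hnil : IsNilpotent (RingHom.ker (algebraMap R k)))
    (A : Type) [CommRing A] [Algebra R A] [Algebra.FormallySmooth R A] :
    Nonempty (A ≃ₐ[R] (R ⊗[k] (k ⊗[R] A))) := by
  set I : Ideal R := RingHom.ker (algebraMap R k) with hIdef
  have hmem : ∀ r : R, r - algebraMap k R (algebraMap R k r) ∈ I := by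
    intro r
    rw [hIdef, RingHom.mem_ker, map_sub, hres, sub_self]
  have hmem' : ∀ r : R, algebraMap k R (algebraMap R k r) - r ∈ I := by
    intro r
    rw [hIdef, RingHom.mem_ker, map_sub, hres, sub_self]
  haveI htower : IsScalarTower k R (k ⊗[R] A) := IsScalarTower.of_algebraMap_eq' (by
    ext c
    rw [RingHom.comp_apply, IsScalarTower.algebraMap_apply R k (k ⊗[R] A), hres])
  -- the canonical maps
  set p : A →ₐ[R] k ⊗[R] A := Algebra.TensorProduct.includeRight with hpdef
  set q : (R ⊗[k] (k ⊗[R] A)) →ₐ[R] (k ⊗[R] A) :=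
    Algebra.TensorProduct.lift (Algebra.ofId R _) (AlgHom.id k _)
      (fun _ _ => Commute.all _ _) with hqdef
  have hq1 : ∀ x : k ⊗[R] A, q (1 ⊗ₜ x) = x := by
    intro x; simp [hqdef, Algebra.TensorProduct.lift_tmul, ← Algebra.TensorProduct.one_def]
  have hqsurj : Function.Surjective q := fun x => ⟨1 ⊗ₜ x, hq1 x⟩
  -- kernel of p is contained in I·A
  have hkerp : RingHom.ker p ≤ I.map (algebraMap R A) := by
    set J : Ideal A := I.map (algebraMap R A) with hJdef
    have hcomm : ∀ r : R, (Ideal.Quotient.mk J) (algebraMap R A (algebraMap k R (algebraMap R k r)))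
        = algebraMap R (A ⧸ J) r := by
      intro r
      have h1 : algebraMap R (A ⧸ J) r = Ideal.Quotient.mk J (algebraMap R A r) := rfl
      rw [h1, Ideal.Quotient.mk_eq_mk_iff_sub_mem, ← map_sub]
      exact Ideal.mem_map_of_mem _ (hmem' r)
    let χ : k →ₐ[R] A ⧸ J :=
      { toRingHom := (Ideal.Quotient.mk J).comp ((algebraMap R A).comp (algebraMap k R)),
        commutes' := fun r => hcomm r }
    let v : (k ⊗[R] A) →ₐ[R] A ⧸ J := Algebra.TensorProduct.productMap χ (Ideal.Quotient.mkₐ R J)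
    intro a ha
    rw [RingHom.mem_ker] at ha
    have hv : v (p a) = Ideal.Quotient.mk J a := by
      rw [hpdef]
      show v ((1:k) ⊗ₜ a) = _
      rw [Algebra.TensorProduct.productMap_apply_tmul]
      simp [χ]
    rw [ha, map_zero] at hv
    exact Ideal.Quotient.eq_zero_iff_mem.mp hv.symm
  -- every element of B is congruent to `includeRight` of its image under q, mod I·B
  have hbase : ∀ b : R ⊗[k] (k ⊗[R] A),
      b - Algebra.TensorProduct.includeRight (q b) ∈
        I.map (algebraMap R (R ⊗[k] (k ⊗[R] A))) := by
    intro b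
    induction b using TensorProduct.induction_on with
    | zero => simpa using Ideal.zero_mem _
    | tmul r a =>
      have h1 : q (r ⊗ₜ a) = algebraMap R (k ⊗[R] A) r * a := by
        simp [hqdef, Algebra.TensorProduct.lift_tmul, Algebra.ofId_apply]
      have h2 : (Algebra.TensorProduct.includeRight (q (r ⊗ₜ a)) : R ⊗[k] (k ⊗[R] A))
          = algebraMap k R (algebraMap R k r) ⊗ₜ[k] a := by
        rw [h1, Algebra.TensorProduct.includeRight_apply,
          IsScalarTower.algebraMap_apply R k (k ⊗[R] A), ← Algebra.smul_def,
          tmul_smul, smul_tmul', ← Algebra.algebraMap_eq_smul_one]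
      rw [h2, ← TensorProduct.sub_tmul]
      have h3 : (r - algebraMap k R (algebraMap R k r)) ⊗ₜ[k] a
          = algebraMap R (R ⊗[k] (k ⊗[R] A)) (r - algebraMap k R (algebraMap R k r))
            * ((1:R) ⊗ₜ[k] a) := by
        rw [← Algebra.smul_def, smul_tmul', smul_eq_mul, mul_one]
      rw [h3]
      exact Ideal.mul_mem_right _ _ (Ideal.mem_map_of_mem _ (hmem r))
    | add x y hx hy =>
      rw [map_add, map_add, add_sub_add_comm]
      exact add_mem hx hy
  have hkerq : IsNilpotent (RingHom.ker (q : (R ⊗[k] (k ⊗[R] A)) →+* (k ⊗[R] A))) := by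
    refine nilpotent_of_le_map hnil ?_
    intro b hb
    rw [RingHom.mem_ker] at hb
    have hb' : q b = 0 := hb
    have h := hbase b
    rwa [hb', map_zero, sub_zero] at h
  haveI : Algebra.FormallySmooth k (k ⊗[R] A) := inferInstance
  haveI : Algebra.FormallySmooth R (R ⊗[k] (k ⊗[R] A)) := inferInstance
  -- lift p through q
  set f : A →ₐ[R] (R ⊗[k] (k ⊗[R] A)) :=
    Algebra.FormallySmooth.liftOfSurjective p q hqsurj hkerq with hfdef
  have hfq : ∀ a : A, q (f a) = p a := fun a =>
    Algebra.FormallySmooth.liftOfSurjective_apply p q hqsurj hkerq a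
  -- f is surjective
  have hfsurj : Function.Surjective f := by
    have key : ∀ b : R ⊗[k] (k ⊗[R] A), b ∈ Subalgebra.toSubmodule f.range := by
      refine nakayama_aux hnil ?_
      have haux : ∀ x : k ⊗[R] A, ∃ s ∈ Subalgebra.toSubmodule f.range,
          (Algebra.TensorProduct.includeRight x : R ⊗[k] (k ⊗[R] A)) - s ∈
            I.map (algebraMap R (R ⊗[k] (k ⊗[R] A))) := by
        intro x
        induction x using TensorProduct.induction_on with
        | zero => exact ⟨0, zero_mem _, by simpa using Ideal.zero_mem _⟩
        | tmul c a =>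
          refine ⟨f (algebraMap R A (algebraMap k R c) * a), ⟨_, rfl⟩, ?_⟩
          have h' : (Algebra.TensorProduct.includeRight (q (f a)) : R ⊗[k] (k ⊗[R] A)) - f a
              ∈ I.map (algebraMap R (R ⊗[k] (k ⊗[R] A))) := by
            have := neg_mem (hbase (f a))
            rwa [neg_sub] at this
          have e2 : (Algebra.TensorProduct.includeRight (c ⊗ₜ[R] a) : R ⊗[k] (k ⊗[R] A))
              = algebraMap R (R ⊗[k] (k ⊗[R] A)) (algebraMap k R c)
                * Algebra.TensorProduct.includeRight (p a) := by
            rw [hpdef, Algebra.TensorProduct.includeRight_apply,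
              Algebra.TensorProduct.includeRight_apply, Algebra.TensorProduct.includeRight_apply,
              Algebra.TensorProduct.algebraMap_apply, Algebra.TensorProduct.tmul_mul_tmul,
              Algebra.algebraMap_self, RingHom.id_apply, mul_one, one_mul]
            rw [Algebra.algebraMap_eq_smul_one (R := k) (A := R), smul_tmul, smul_tmul',
              smul_eq_mul, mul_one]
          have e4 : f (algebraMap R A (algebraMap k R c) * a)
              = algebraMap R (R ⊗[k] (k ⊗[R] A)) (algebraMap k R c) * f a := by
            rw [map_mul, f.commutes]
          rw [e2, e4, ← hfq a, ← mul_sub]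
          exact Ideal.mul_mem_left _ _ h'
        | add x y hx hy =>
          obtain ⟨s, hs, hs'⟩ := hx
          obtain ⟨t, ht, ht'⟩ := hy
          exact ⟨s + t, add_mem hs ht, by
            rw [map_add, add_sub_add_comm]; exact add_mem hs' ht'⟩
      intro b
      obtain ⟨s, hs, hs'⟩ := haux (q b)
      refine ⟨s, hs, ?_⟩
      have h1 := hbase b
      have h2 : b - s = (b - Algebra.TensorProduct.includeRight (q b))
          + ((Algebra.TensorProduct.includeRight (q b) : R ⊗[k] (k ⊗[R] A)) - s) := by ring
      rw [h2]
      exact add_mem h1 hs'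
    intro b
    obtain ⟨a, ha⟩ := key b
    exact ⟨a, ha⟩
  -- kernel of f is nilpotent
  have hkerf : IsNilpotent (RingHom.ker (f : A →+* (R ⊗[k] (k ⊗[R] A)))) := by
    refine nilpotent_of_le_map hnil (le_trans ?_ hkerp)
    intro a ha
    rw [RingHom.mem_ker] at ha ⊢
    have ha' : f a = 0 := ha
    show p a = 0
    rw [← hfq a, ha', map_zero]
  -- lift the identity of B through f to get the inverse
  set s : (R ⊗[k] (k ⊗[R] A)) →ₐ[R] A :=
    Algebra.FormallySmooth.liftOfSurjective (AlgHom.id R (R ⊗[k] (k ⊗[R] A))) f hfsurj hkerf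
    with hsdef
  have hfs : ∀ b, f (s b) = b := fun b =>
    Algebra.FormallySmooth.liftOfSurjective_apply _ f hfsurj hkerf b
  have hsinj : Function.Injective s := fun x y h => by
    rw [← hfs x, ← hfs y, h]
  have hssurj : Function.Surjective s := by
    have key : ∀ a : A, a ∈ Subalgebra.toSubmodule s.range := by
      refine nakayama_aux hnil ?_
      intro a
      refine ⟨s (f a), ⟨f a, rfl⟩, ?_⟩
      have hz : f (a - s (f a)) = 0 := by rw [map_sub, hfs, sub_self]
      refine hkerp ?_
      rw [RingHom.mem_ker]
      show p (a - s (f a)) = 0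
      rw [← hfq, hz, map_zero]
    intro a
    obtain ⟨b, hb⟩ := key a
    exact ⟨b, hb⟩
  exact ⟨(AlgEquiv.ofBijective s ⟨hsinj, hssurj⟩).symm⟩


/-- Deformations of smooth affine schemes over the truncated polynomial ring
`R_n = k[t]/(t^{n+1})` are trivial: any smooth (formally smooth and finitely presented)
`R_n`-algebra `A` with special fibre `A_0 = A ⊗_{R_n} k` is isomorphic, as an
`R_n`-algebra, to `A_0 ⊗_k R_n`. -/
theorem smooth_deformation_trivial (k : Type) [Field k] (n : ℕ)
    (A : Type) [CommRing A] [Algebra (TruncPoly k n) A]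
    [Algebra.FormallySmooth (TruncPoly k n) A]
    [Algebra.FinitePresentation (TruncPoly k n) A] :
    Nonempty (A ≃ₐ[TruncPoly k n]
      (TruncPoly k n ⊗[k] (k ⊗[TruncPoly k n] A))) := by
  exact smooth_deformation_general (TruncPoly k n) k (TruncPoly.eps_sigma k n)
    (TruncPoly.ker_nilpotent k n) A

end
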